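/- Let V be a type and {ψ_α : V → Fin 2}_{α ∈ A} a nonempty family of functions, each satisfying the triangle condition: for all u, v, w distinguished by some ternary relation T, T u v w implies (ψ_α u : ℕ) + ψ_α v + ψ_α w ≠ 1. Then the pointwise supremum ψ(v) = ⨆_α ψ_α(v) also satisfies: for all u v w with T u v w, (ψ u : ℕ) + ψ v + ψ w ≠ 1. -/
import Mathlib

lemma aux8 : ∀ a : Fin 2, a ≠ 1 → (a : ℕ) = 0 := by decide

open Classical in
theorem stmt8 {V A : Type*} [Nonempty A] (T : V → V → V → Prop)
    (ψ : A → V → Fin 2)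
    (h : ∀ α u v w, T u v w →
      ((ψ α u : ℕ) + (ψ α v : ℕ) + (ψ α w : ℕ) ≠ 1)) :
    ∀ u v w, T u v w →
      ((fun x => if ∃ α, ψ α x = 1 then (1 : Fin 2) else 0) u : ℕ) +
      ((fun x => if ∃ α, ψ α x = 1 then (1 : Fin 2) else 0) v : ℕ) +
      ((fun x => if ∃ α, ψ α x = 1 then (1 : Fin 2) else 0) w : ℕ) ≠ 1 := by
  intro u v w hT
  simp only
  by_cases hu : ∃ α, ψ α u = 1 <;> by_cases hv : ∃ α, ψ α v = 1 <;>
      by_cases hw : ∃ α, ψ α w = 1 <;> simp [hu, hv, hw]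
  · obtain ⟨α, hα⟩ := hu
    push_neg at hv hw
    have := h α u v w hT
    rw [hα, aux8 _ (hv α), aux8 _ (hw α)] at this
    exact this rfl
  · obtain ⟨α, hα⟩ := hv
    push_neg at hu hw
    have := h α u v w hT
    rw [hα, aux8 _ (hu α), aux8 _ (hw α)] at this
    exact this rfl
  · obtain ⟨α, hα⟩ := hw
    push_neg at hu hv
    have := h α u v w hT
    rw [hα, aux8 _ (hu α), aux8 _ (hv α)] at this
    exact this rfl
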